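/- arXiv:1509.04639 — 4 statements merged into one kernel-verified Lean document; each statement's English description precedes it below -/
import Mathlib

section
/- Let p_I, p_J be rationals with 0 < p_J < p_I/2, and let n be a positive integer. Then the function f(k) = p_J·k + p_I·⌊(1 + n - k)/2⌋ defined for integers 0 ≤ k ≤ n - 1 attains its minimum over this range at k = n - 1. -/
/-- When jamming is cheap (`0 < p_J < p_I/2`), the cost
`f(k) = p_J·k + p_I·⌊1 + (n - k)/2⌋` over integers `0 ≤ k ≤ n - 1`
attains its minimum at `k = n - 1`. -/
theorem stmt_1 (pI pJ : ℚ) (hJ0 : 0 < pJ) (hJI : pJ < pI / 2) (n : ℤ) (hn : 1 ≤ n) :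
    ∀ k : ℤ, 0 ≤ k → k ≤ n - 1 →
      pJ * ((n : ℚ) - 1) + pI * ((⌊1 + (((n : ℚ) - ((n : ℚ) - 1)) / 2)⌋ : ℤ) : ℚ) ≤
        pJ * (k : ℚ) + pI * ((⌊1 + (((n : ℚ) - (k : ℚ)) / 2)⌋ : ℤ) : ℚ) := by
  intro k hk0 hk1
  have hL : ⌊1 + (((n : ℚ) - ((n : ℚ) - 1)) / 2)⌋ = 1 := by
    norm_num
  rw [hL]
  set F : ℤ := ⌊1 + (((n : ℚ) - (k : ℚ)) / 2)⌋ with hF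
  have h1 : (1 + (((n : ℚ) - (k : ℚ)) / 2)) - 1 < (F : ℚ) :=
    Int.sub_one_lt_floor _
  have h2 : ((n : ℚ) - (k : ℚ)) < 2 * (F : ℚ) := by linarith
  have h3 : n - k < 2 * F := by exact_mod_cast h2
  have h4 : n - k + 1 ≤ 2 * F := h3
  have h5 : ((n : ℚ) - (k : ℚ) + 1) ≤ 2 * (F : ℚ) := by exact_mod_cast h4
  have hk1' : (k : ℚ) ≤ (n : ℚ) - 1 := by exact_mod_cast hk1
  push_cast
  nlinarith [mul_nonneg (by linarith : (0:ℚ) ≤ pI / 2 - pJ) (by linarith : (0:ℚ) ≤ (n:ℚ) - 1 - k),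
    mul_nonneg (by linarith : (0:ℚ) ≤ pI) (by linarith : (0:ℚ) ≤ 2 * (F:ℚ) - ((n:ℚ) - k + 1))]
end

section
/- Let p_I, p_J be rationals with p_I/2 ≤ p_J ≤ p_I, and let m be a nonnegative integer. Then the function f(k) = p_J·k + p_I·⌊(1 + m - k)/2⌋ over integers 0 ≤ k ≤ m attains its minimum at k = 1 - (m mod 2), i.e., at k = 0 if m is odd and k = 1 if m is even. -/
/-- When `p_I/2 ≤ p_J ≤ p_I`, the cost `f(k) = p_J·k + p_I·⌊1 + (m - k)/2⌋`
over integers `0 ≤ k ≤ m` attains its minimum at `k = 1 - (m mod 2)`. -/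
theorem stmt_2 (pI pJ : ℚ) (h1 : pI / 2 ≤ pJ) (h2 : pJ ≤ pI) (h3 : 0 < pJ)
    (m : ℤ) (hm : 0 ≤ m) :
    ∀ k : ℤ, 0 ≤ k → k ≤ m →
      pJ * ((1 - m % 2 : ℤ) : ℚ) +
          pI * ((⌊1 + (((m : ℚ) - ((1 - m % 2 : ℤ) : ℚ)) / 2)⌋ : ℤ) : ℚ) ≤
        pJ * (k : ℚ) + pI * ((⌊1 + (((m : ℚ) - (k : ℚ)) / 2)⌋ : ℤ) : ℚ) := by
  intro k hk hkm
  have key : ∀ a : ℤ, (1 + (((m : ℚ) - (a : ℚ)) / 2)) = ((m - a + 2 : ℤ) : ℚ) / ((2 : ℕ) : ℚ) := by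
    intro a; push_cast; ring
  rw [key, key, Rat.floor_intCast_div_natCast, Rat.floor_intCast_div_natCast]
  set a : ℤ := 1 - m % 2 with ha
  set j1 : ℤ := (m - a + 2) / (2 : ℕ) with hj1
  set j2 : ℤ := (m - k + 2) / (2 : ℕ) with hj2
  set e : ℤ := (m - k) % 2 with he
  have hA : 2 * j1 = m - a + 1 := by omega
  have hB : 2 * j2 = m - k + 2 - e := by omega
  have hAq : (2 : ℚ) * (j1 : ℚ) = (m : ℚ) - a + 1 := by exact_mod_cast congrArg (Int.cast : ℤ → ℚ) hA
  have hBq : (2 : ℚ) * (j2 : ℚ) = (m : ℚ) - k + 2 - e := by exact_mod_cast congrArg (Int.cast : ℤ → ℚ) hB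
  have hkq : (0 : ℚ) ≤ (k : ℚ) := by exact_mod_cast hk
  rcases (by omega : e = 0 ∨ e = 1) with h | h
  · -- e = 0 : m - k even
    have hpar : (m - k) % 2 = 0 := by omega
    rcases (by omega : m % 2 = 0 ∨ m % 2 = 1) with hmp | hmp
    · -- m even, k even, a = 1
      have haa : a = 1 := by omega
      rcases (by omega : k = 0 ∨ 2 ≤ k) with hk0 | hk2
      · subst hk0
        have heq : (e : ℚ) = 0 := by exact_mod_cast h
        have haq : (a : ℚ) = 1 := by exact_mod_cast haa
        nlinarith [hAq, hBq]
      · have heq : (e : ℚ) = 0 := by exact_mod_cast h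
        have haq : (a : ℚ) = 1 := by exact_mod_cast haa
        have hk2q : (2 : ℚ) ≤ (k : ℚ) := by exact_mod_cast hk2
        nlinarith [hAq, hBq]
    · -- m odd, k odd, a = 0, k ≥ 1
      have haa : a = 0 := by omega
      have hk1 : 1 ≤ k := by omega
      have heq : (e : ℚ) = 0 := by exact_mod_cast h
      have haq : (a : ℚ) = 0 := by exact_mod_cast haa
      have hk1q : (1 : ℚ) ≤ (k : ℚ) := by exact_mod_cast hk1
      nlinarith [hAq, hBq]
  · -- e = 1 : k ≥ a
    have hka : a ≤ k := by omega
    have heq : (e : ℚ) = 1 := by exact_mod_cast h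
    have hkaq : (a : ℚ) ≤ (k : ℚ) := by exact_mod_cast hka
    nlinarith [hAq, hBq]
end

section
/- Let p_I, p_J^S, p_J^{Sc} be rationals with p_J^{Sc} < p_I/2 ≤ p_J^S and p_J^S + p_J^{Sc} ≥ p_I fails, i.e., assume p_J^S + p_J^{Sc} < p_I. Then the detectable generalized attack cost minimized over the number of injected edges equals the hidden generalized attack cost: for any cut with s secure and t ≥ 1 insecure edges, the minimum of g(k) = (p_J^S + p_J^{Sc} − p_I)k + (p_I − p_J^{Sc})(s+1) + p_J^{Sc}·t over max(0, s−t+1) ≤ k ≤ s equals p_J^S·s + p_J^{Sc}·t + (p_I − p_J^{Sc}), which is the hidden-attack cost of the same cut. -/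
/-- In Cost Interval III (`p_J^{Sc} < p_I/2 ≤ p_J^S`, `p_J^S + p_J^{Sc} < p_I`),
the minimum over `max 0 (s-t+1) ≤ k ≤ s` of the detectable generalized attack
cost `g(k)` equals the hidden generalized attack cost
`p_J^S·s + p_J^{Sc}·t + (p_I - p_J^{Sc})` of the same cut. -/
theorem stmt_15 (pI pJS pJSc : ℚ) (h1 : pJSc < pI / 2) (h2 : pI / 2 ≤ pJS)
    (h3 : pJS + pJSc < pI) (s t : ℤ) (hs : 0 ≤ s) (ht : 1 ≤ t) :
    IsLeast
      ((fun k : ℤ => (pJS + pJSc - pI) * (k : ℚ) + (pI - pJSc) * ((s : ℚ) + 1)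
          + pJSc * (t : ℚ)) '' Set.Icc (max 0 (s - t + 1)) s)
      (pJS * (s : ℚ) + pJSc * (t : ℚ) + (pI - pJSc)) := by
  constructor
  · refine ⟨s, ?_, by ring⟩
    exact Set.mem_Icc.mpr ⟨max_le hs (by omega), le_refl s⟩
  · rintro x ⟨k, hk, rfl⟩
    have hks : (k : ℚ) ≤ s := by exact_mod_cast (Set.mem_Icc.mp hk).2
    simp only
    nlinarith [mul_le_mul_of_nonpos_left hks (by linarith : pJS + pJSc - pI ≤ 0)]
end

section
/- Let p_I, p_J^S, p_J^{Sc} be rationals with p_I/2 ≤ p_J^{Sc} ≤ p_J^S ≤ p_I, and consider f(k) = p_J^S·k + p_I·⌊(1 + m − k)/2⌋ + p_J^{Sc}·(1 − (m − k) mod 2) for integers k in [max(0, s − t + 1), s], where m = s + t, t ≥ 1. Then f is nondecreasing in k, so its minimum is attained at k = max(0, s − t + 1); in particular, when s < t the minimum is f(0). -/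
private lemma floor_helper (a k : ℤ) :
    ⌊(1 + (a : ℚ) - (k : ℚ)) / 2⌋ = (1 + a - k) / 2 := by
  have : (1 + (a : ℚ) - (k : ℚ)) = ((1 + a - k : ℤ) : ℚ) := by push_cast; ring
  rw [this]
  exact_mod_cast Rat.floor_intCast_div_natCast (1 + a - k) 2

private lemma mono_helper (pI pJS pJSc : ℚ) (h1 : pI / 2 ≤ pJSc) (h2 : pJSc ≤ pJS)
    (h3 : pJS ≤ pI) (s t : ℤ) :
    ∀ k k' : ℤ, k ≤ k' →
      pJS * (k : ℚ) + pI * (((1 + (s + t) - k) / 2 : ℤ) : ℚ) +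
          pJSc * (((1 - (s + t - k) % 2 : ℤ)) : ℚ) ≤
        pJS * (k' : ℚ) + pI * (((1 + (s + t) - k') / 2 : ℤ) : ℚ) +
          pJSc * (((1 - (s + t - k') % 2 : ℤ)) : ℚ) := by
  intro k
  refine Int.le_induction le_rfl ?_
  intro n _ ih
  refine ih.trans ?_
  rcases Int.emod_two_eq (s + t - n) with h | h
  · -- even: floor stays, mod term drops from 1 to 0
    have e1 : (1 + (s + t) - (n + 1)) / 2 = (1 + (s + t) - n) / 2 := by omega
    have e2 : (s + t - (n + 1)) % 2 = 1 := by omega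
    rw [e1, e2, h]
    push_cast
    nlinarith [h2]
  · -- odd: floor drops by 1, mod term goes from 0 to 1
    have e1 : (1 + (s + t) - (n + 1)) / 2 = (1 + (s + t) - n) / 2 - 1 := by omega
    have e2 : (s + t - (n + 1)) % 2 = 0 := by omega
    rw [e1, e2, h]
    push_cast
    nlinarith [h1, h2]

/-- Cost Interval I (`p_I/2 ≤ p_J^{Sc} ≤ p_J^S ≤ p_I`): the cost
`f(k) = p_J^S·k + p_I·⌊(1 + m - k)/2⌋ + p_J^{Sc}·(1 - (m-k) mod 2)` with
`m = s + t` is nondecreasing on `[max 0 (s-t+1), s]`, so its minimum is at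
`k = max 0 (s-t+1)`; in particular when `s < t` the minimum is `f 0`. -/
theorem stmt_19 (pI pJS pJSc : ℚ) (h1 : pI / 2 ≤ pJSc) (h2 : pJSc ≤ pJS)
    (h3 : pJS ≤ pI) (s t : ℤ) (hs : 0 ≤ s) (ht : 1 ≤ t) :
    (∀ k k' : ℤ, max 0 (s - t + 1) ≤ k → k ≤ k' → k' ≤ s →
        pJS * (k : ℚ) + pI * ((⌊(1 + ((s + t : ℤ) : ℚ) - (k : ℚ)) / 2⌋ : ℤ) : ℚ) +
            pJSc * (((1 - (s + t - k) % 2 : ℤ)) : ℚ) ≤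
          pJS * (k' : ℚ) + pI * ((⌊(1 + ((s + t : ℤ) : ℚ) - (k' : ℚ)) / 2⌋ : ℤ) : ℚ) +
            pJSc * (((1 - (s + t - k') % 2 : ℤ)) : ℚ)) ∧
    (∀ k : ℤ, max 0 (s - t + 1) ≤ k → k ≤ s →
        pJS * ((max 0 (s - t + 1) : ℤ) : ℚ) +
            pI * ((⌊(1 + ((s + t : ℤ) : ℚ) - ((max 0 (s - t + 1) : ℤ) : ℚ)) / 2⌋ : ℤ) : ℚ) +
            pJSc * (((1 - (s + t - max 0 (s - t + 1)) % 2 : ℤ)) : ℚ) ≤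
          pJS * (k : ℚ) + pI * ((⌊(1 + ((s + t : ℤ) : ℚ) - (k : ℚ)) / 2⌋ : ℤ) : ℚ) +
            pJSc * (((1 - (s + t - k) % 2 : ℤ)) : ℚ)) ∧
    (s < t → max 0 (s - t + 1) = 0) := by
  refine ⟨?_, ?_, ?_⟩
  · intro k k' _ hkk' _
    rw [floor_helper, floor_helper]
    exact mono_helper pI pJS pJSc h1 h2 h3 s t k k' hkk'
  · intro k hk _
    rw [floor_helper, floor_helper]
    exact mono_helper pI pJS pJSc h1 h2 h3 s t _ k hk
  · intro h
    omega
end
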